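/- arXiv:2106.03531 — 2 statements merged into one kernel-verified Lean document; each statement's English description precedes it below -/
import Mathlib

section
/- For every n ≥ 1, the complete graph K_{2n+1} satisfies θ_int(K_{2n+1}) = 2, while its arboricity satisfies γ(K_{2n+1}) ≥ n + 1; hence γ(K_{2n+1}) − θ_int(K_{2n+1}) ≥ n − 1. -/
open SimpleGraph

variable {V : Type*}

/-- A proper edge coloring: distinct edges sharing a vertex get distinct colors. -/
def IsProperEdgeColoring (G : SimpleGraph V) (c : Sym2 V → ℕ) : Prop :=
  ∀ e₁ ∈ G.edgeSet, ∀ e₂ ∈ G.edgeSet, e₁ ≠ e₂ → (∃ v, v ∈ e₁ ∧ v ∈ e₂) → c e₁ ≠ c e₂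

/-- The set of colors appearing on edges incident to `v`. -/
def colorsAt (G : SimpleGraph V) (c : Sym2 V → ℕ) (v : V) : Set ℕ :=
  {n | ∃ e ∈ G.edgeSet, v ∈ e ∧ c e = n}

/-- An interval coloring: a proper edge coloring with positive integer colors such that
the set of colors at each vertex is an interval of integers. -/
def IsIntervalColoring (G : SimpleGraph V) (c : Sym2 V → ℕ) : Prop :=
  IsProperEdgeColoring G c ∧ (∀ e ∈ G.edgeSet, 1 ≤ c e) ∧
    ∀ v, ∀ a ∈ colorsAt G c v, ∀ b ∈ colorsAt G c v, ∀ k, a ≤ k → k ≤ b →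
      k ∈ colorsAt G c v

def IntervalColorable (G : SimpleGraph V) : Prop :=
  ∃ c, IsIntervalColoring G c

/-- The chromatic index: least `t` admitting a proper edge coloring with colors in `{1,…,t}`. -/
noncomputable def chromIndex (G : SimpleGraph V) : ℕ :=
  sInf {t | ∃ c, IsProperEdgeColoring G c ∧ ∀ e ∈ G.edgeSet, c e ∈ Finset.Icc 1 t}

/-- A decomposition of `G` into `k` edge-disjoint interval colorable subgraphs. -/
def IntervalDecomposition (G : SimpleGraph V) (k : ℕ) : Prop :=
  ∃ H : Fin k → SimpleGraph V, (∀ i, H i ≤ G) ∧ (∀ i, IntervalColorable (H i)) ∧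
    ∀ e ∈ G.edgeSet, ∃! i, e ∈ (H i).edgeSet

/-- The interval coloring thickness of `G`. -/
noncomputable def intervalThickness (G : SimpleGraph V) : ℕ :=
  sInf {k | IntervalDecomposition G k}

/-- The arboricity: least number of edge-disjoint forests decomposing `G`. -/
noncomputable def arboricity (G : SimpleGraph V) : ℕ :=
  sInf {k | ∃ F : Fin k → SimpleGraph V, (∀ i, F i ≤ G) ∧ (∀ i, (F i).IsAcyclic) ∧
    ∀ e ∈ G.edgeSet, ∃! i, e ∈ (F i).edgeSet}



lemma acyclic_aux {V : Type*} [Fintype V] :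
    ∀ (k : ℕ) (G : SimpleGraph V), G.IsAcyclic → G.edgeSet.ncard = k →
      k + Nat.card G.ConnectedComponent ≤ Fintype.card V := by
  intro k
  induction k with
  | zero =>
    intro G _ _
    simpa using Nat.card_le_card_of_surjective G.connectedComponentMk (fun c => c.exists_rep)
  | succ m ih =>
    intro G hac hcard
    have hne : G.edgeSet.Nonempty := by
      rw [Set.nonempty_iff_ne_empty]
      intro h
      rw [h] at hcard
      simp at hcard
    obtain ⟨e, he⟩ := hne
    induction e using Sym2.ind with
    | _ a b =>
    have hadj : G.Adj a b := he
    set G' := G \ fromEdgeSet {s(a,b)} with hG'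
    have hle : G' ≤ G := sdiff_le
    have hac' : G'.IsAcyclic := by
      intro v w hw
      exact hac (w.mapLe hle) (hw.mapLe hle)
    have hcard' : G'.edgeSet.ncard = m := by
      have : G'.edgeSet = G.edgeSet \ {s(a,b)} := by
        rw [hG', edgeSet_sdiff, edgeSet_fromEdgeSet, edgeSet_sdiff_sdiff_isDiag]
      rw [this, Set.ncard_diff_singleton_of_mem he, hcard]; omega
    have hbridge : ¬ G'.Reachable a b := (isAcyclic_iff_forall_adj_isBridge.mp hac hadj)
    have hsurj : Function.Surjective
        (ConnectedComponent.map (Hom.ofLE hle)) := by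
      intro c
      induction c using ConnectedComponent.ind with
      | _ v => exact ⟨G'.connectedComponentMk v, rfl⟩
    have hninj : ¬ Function.Injective
        (ConnectedComponent.map (Hom.ofLE hle)) := by
      intro hinj
      have : G'.connectedComponentMk a = G'.connectedComponentMk b := by
        apply hinj
        simp only [ConnectedComponent.map_mk, Hom.ofLE_apply]
        exact ConnectedComponent.sound hadj.reachable
      exact hbridge (ConnectedComponent.exact this)
    classical
    have hlt : Nat.card G.ConnectedComponent < Nat.card G'.ConnectedComponent := by
      have f1 : Fintype G'.ConnectedComponent := Fintype.ofSurjective G'.connectedComponentMk (fun c => c.exists_rep)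
      have f2 : Fintype G.ConnectedComponent := Fintype.ofSurjective G.connectedComponentMk (fun c => c.exists_rep)
      rw [Nat.card_eq_fintype_card, Nat.card_eq_fintype_card]
      exact Fintype.card_lt_of_surjective_not_injective _ hsurj hninj
    have := ih G' hac' hcard'
    omega

lemma acyclic_ncard {V : Type*} [Fintype V] [Nonempty V] (G : SimpleGraph V)
    (h : G.IsAcyclic) : G.edgeSet.ncard + 1 ≤ Fintype.card V := by
  have h1 := acyclic_aux G.edgeSet.ncard G h rfl
  have h2 : 1 ≤ Nat.card G.ConnectedComponent := by
    have : Finite G.ConnectedComponent :=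
      Finite.of_surjective G.connectedComponentMk (fun c => c.exists_rep)
    have : Nonempty G.ConnectedComponent := ⟨G.connectedComponentMk (Classical.arbitrary _)⟩
    exact Nat.card_pos
  omega

lemma arb_lower (n : ℕ) (hn : 1 ≤ n) (k : ℕ)
    (F : Fin k → SimpleGraph (Fin (2 * n + 1)))
    (hle : ∀ i, F i ≤ (⊤ : SimpleGraph (Fin (2 * n + 1))))
    (hac : ∀ i, (F i).IsAcyclic)
    (hcov : ∀ e ∈ (⊤ : SimpleGraph (Fin (2 * n + 1))).edgeSet, ∃! i, e ∈ (F i).edgeSet) :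
    n + 1 ≤ k := by
  classical
  have hFin : ∀ i, Fintype ((F i).edgeSet) := fun i => Fintype.ofFinite _
  letI := hFin
  have hNE : Nonempty (Fin (2 * n + 1)) := ⟨0⟩
  have hbound : ∀ i, ((F i).edgeFinset).card ≤ 2 * n := by
    intro i
    have := acyclic_ncard (F i) (hac i)
    rw [Set.ncard_eq_toFinset_card'] at this
    have hc : Fintype.card (Fin (2 * n + 1)) = 2 * n + 1 := Fintype.card_fin _
    rw [hc] at this
    have h3 : (F i).edgeSet.toFinset.card = ((F i).edgeFinset).card := rfl
    omega
  have hsub : (⊤ : SimpleGraph (Fin (2 * n + 1))).edgeFinset ⊆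
      Finset.univ.biUnion (fun i => (F i).edgeFinset) := by
    intro e he
    rw [mem_edgeFinset] at he
    obtain ⟨i, hi, -⟩ := hcov e he
    exact Finset.mem_biUnion.mpr ⟨i, Finset.mem_univ _, (mem_edgeFinset).mpr hi⟩
  have htot : ((⊤ : SimpleGraph (Fin (2 * n + 1))).edgeFinset).card = n * (2 * n + 1) := by
    rw [card_edgeFinset_top_eq_card_choose_two, Fintype.card_fin, Nat.choose_two_right,
      Nat.add_sub_cancel, show (2 * n + 1) * (2 * n) = n * (2 * n + 1) * 2 by ring]
    exact Nat.mul_div_cancel _ (by norm_num)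
  have hle2 : n * (2 * n + 1) ≤ k * (2 * n) := by
    calc n * (2 * n + 1) = ((⊤ : SimpleGraph (Fin (2 * n + 1))).edgeFinset).card := htot.symm
    _ ≤ (Finset.univ.biUnion (fun i => (F i).edgeFinset)).card := Finset.card_le_card hsub
    _ ≤ ∑ i, ((F i).edgeFinset).card := Finset.card_biUnion_le
    _ ≤ ∑ _i : Fin k, 2 * n := Finset.sum_le_sum (fun i _ => hbound i)
    _ = k * (2 * n) := by simp [Finset.sum_const, mul_comm]
  by_contra hlt
  push_neg at hlt
  have : k * (2 * n) ≤ n * (2 * n) := Nat.mul_le_mul_right _ (by omega)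
  nlinarith

variable {N : ℕ}

def starAt (i : Fin N) : SimpleGraph (Fin N) where
  Adj a b := (a = i ∧ i < b) ∨ (b = i ∧ i < a)
  symm := ⟨by intro a b h; tauto⟩
  loopless := ⟨by intro a h; rcases h with ⟨rfl, h⟩ | ⟨rfl, h⟩ <;> exact lt_irrefl _ h⟩

lemma starAt_isAcyclic (i : Fin N) : (starAt i).IsAcyclic := by
  rw [isAcyclic_iff_forall_adj_isBridge]
  intro v w hadj
  rw [isBridge_iff]
  -- one of v, w equals i; the other is isolated after deleting the edge
  have key : ∀ (b : Fin N), b ≠ i → ((starAt i) \ fromEdgeSet {s(b, i)}).Reachable b i → False := by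
    intro b hb hr
    obtain ⟨p⟩ := hr
    cases p with
    | nil => exact hb rfl
    | @cons _ x _ h q =>
      rw [sdiff_adj] at h
      obtain ⟨h1, h2⟩ := h
      have hx : x = i := by
        rcases h1 with ⟨h3, -⟩ | ⟨h3, -⟩
        · exact absurd h3 hb
        · exact h3
      subst hx
      rw [fromEdgeSet_adj] at h2
      exact h2 ⟨rfl, hb⟩
  rcases hadj with ⟨rfl, hlt⟩ | ⟨rfl, hlt⟩
  · -- v = i, w is the leaf
    intro hr
    refine key w (by intro h; subst h; exact lt_irrefl _ hlt) ?_
    have : s(w, v) = s(v, w) := Sym2.eq_swap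
    rw [this]
    exact hr.symm
  · intro hr
    exact key v (by intro h; subst h; exact lt_irrefl _ hlt) hr

lemma arb_mem (n : ℕ) :
    ∃ F : Fin (2*n+1) → SimpleGraph (Fin (2 * n + 1)),
      (∀ i, F i ≤ (⊤ : SimpleGraph (Fin (2 * n + 1)))) ∧ (∀ i, (F i).IsAcyclic) ∧
      ∀ e ∈ (⊤ : SimpleGraph (Fin (2 * n + 1))).edgeSet, ∃! i, e ∈ (F i).edgeSet := by
  refine ⟨fun i => starAt i, fun i => le_top, fun i => starAt_isAcyclic i, ?_⟩
  intro e he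
  induction e using Sym2.ind with
  | _ a b =>
  rw [mem_edgeSet, top_adj] at he
  refine ⟨min a b, ?_, ?_⟩
  · show s(a, b) ∈ (starAt (min a b)).edgeSet
    rw [mem_edgeSet]
    rcases lt_or_gt_of_ne he with h | h
    · simp only [min_eq_left h.le]
      exact Or.inl ⟨rfl, h⟩
    · simp only [min_eq_right h.le]
      exact Or.inr ⟨rfl, h⟩
  · intro j hj
    rw [show ((fun i => starAt i) j) = starAt j from rfl, mem_edgeSet] at hj
    rcases hj with ⟨rfl, h⟩ | ⟨rfl, h⟩
    · exact (min_eq_left h.le).symm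
    · exact (min_eq_right h.le).symm

lemma edge_ex {V : Type*} {G : SimpleGraph V} {e : Sym2 V} {v : V}
    (he : e ∈ G.edgeSet) (hv : v ∈ e) : ∃ w, G.Adj v w ∧ e = s(v, w) := by
  obtain ⟨w, rfl⟩ := Sym2.mem_iff_exists.mp hv
  exact ⟨w, (mem_edgeSet G).mp he, rfl⟩

def ctr (n : ℕ) : Fin (2*n+1) := ⟨2*n, by omega⟩

def H0 (n : ℕ) : SimpleGraph (Fin (2*n+1)) where
  Adj a b := a ≠ b ∧ (a = ctr n ∨ b = ctr n)
  symm := ⟨by intro a b h; exact ⟨h.1.symm, h.2.symm⟩⟩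
  loopless := ⟨fun a h => h.1 rfl⟩

noncomputable def c0 (n : ℕ) : Sym2 (Fin (2*n+1)) → ℕ :=
  Sym2.lift ⟨fun a b => min a.val b.val + 1, by intro a b; simp [Nat.min_comm]⟩

@[simp] lemma c0_mk (n : ℕ) (a b : Fin (2*n+1)) : c0 n s(a, b) = min a.val b.val + 1 := rfl

lemma H0_ic (n : ℕ) : IsIntervalColoring (H0 n) (c0 n) := by
  have hval : ∀ w : Fin (2*n+1), w ≠ ctr n → w.val < 2*n := by
    intro w hw
    have := w.isLt
    have : w.val ≠ 2*n := fun h => hw (Fin.ext h)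
    omega
  refine ⟨?_, ?_, ?_⟩
  · intro e1 he1 e2 he2 hne ⟨v, hv1, hv2⟩
    obtain ⟨w1, ha1, rfl⟩ := edge_ex he1 hv1
    obtain ⟨w2, ha2, rfl⟩ := edge_ex he2 hv2
    have hw : w1 ≠ w2 := fun h => hne (by rw [h])
    by_cases hv : v = ctr n
    · have h1 : w1 ≠ ctr n := fun h => ha1.1 (hv.trans h.symm)
      have h2 : w2 ≠ ctr n := fun h => ha2.1 (hv.trans h.symm)
      have e1 := hval _ h1
      have e2 := hval _ h2
      have hv' : v.val = 2*n := by rw [hv]; rfl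
      simp only [c0_mk, hv']
      intro hc
      have : w1.val = w2.val := by omega
      exact hw (Fin.ext this)
    · have h1 : w1 = ctr n := (ha1.2).resolve_left hv
      have h2 : w2 = ctr n := (ha2.2).resolve_left hv
      exact absurd (h1.trans h2.symm) hw
  · intro e he
    induction e using Sym2.ind with
    | _ a b => simp
  · intro v a ha b hb k hak hkb
    obtain ⟨e1, he1, hv1, hc1⟩ := ha
    obtain ⟨e2, he2, hv2, hc2⟩ := hb
    obtain ⟨w1, ha1, rfl⟩ := edge_ex he1 hv1
    obtain ⟨w2, ha2, rfl⟩ := edge_ex he2 hv2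
    by_cases hv : v = ctr n
    · have h2 : w2 ≠ ctr n := fun h => ha2.1 (hv.trans h.symm)
      have hw2 := hval _ h2
      have hv' : v.val = 2*n := by rw [hv]; rfl
      have hb2 : b ≤ 2*n := by simp only [c0_mk, hv'] at hc2; omega
      have ha1' : 1 ≤ a := by simp only [c0_mk] at hc1; omega
      have hk1 : 1 ≤ k := le_trans ha1' hak
      have hk2 : k ≤ 2*n := le_trans hkb hb2
      refine ⟨s(v, ⟨k-1, by omega⟩), ?_, Sym2.mem_mk_left _ _, ?_⟩
      · rw [mem_edgeSet]
        refine ⟨?_, Or.inl hv⟩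
        intro h
        have := congrArg Fin.val h
        simp [hv'] at this
        omega
      · simp only [c0_mk, hv']
        omega
    · have h1 : w1 = ctr n := (ha1.2).resolve_left hv
      have h2 : w2 = ctr n := (ha2.2).resolve_left hv
      have hvv := hval _ hv
      have hca : a = v.val + 1 := by
        subst h1; simp only [c0_mk] at hc1
        have : (ctr n).val = 2*n := rfl
        omega
      have hcb : b = v.val + 1 := by
        subst h2; simp only [c0_mk] at hc2
        have : (ctr n).val = 2*n := rfl
        omega
      have : k = a := by omega
      subst this
      exact ⟨_, he1, hv1, hc1⟩


def H1 (n : ℕ) : SimpleGraph (Fin (2*n+1)) where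
  Adj a b := a ≠ b ∧ a ≠ ctr n ∧ b ≠ ctr n
  symm := ⟨by intro a b h; exact ⟨h.1.symm, h.2.2, h.2.1⟩⟩
  loopless := ⟨fun a h => h.1 rfl⟩

def col (n : ℕ) (a b : Fin (2*n+1)) : ℕ :=
  if a.val = 2*n-1 then 2*b.val % (2*n-1) + 1
  else if b.val = 2*n-1 then 2*a.val % (2*n-1) + 1
  else (a.val + b.val) % (2*n-1) + 1

lemma col_symm (n : ℕ) (a b : Fin (2*n+1)) : col n a b = col n b a := by
  unfold col
  by_cases ha : a.val = 2*n-1 <;> by_cases hb : b.val = 2*n-1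
  · simp only [if_pos ha, if_pos hb]; rw [ha.trans hb.symm]
  · simp only [if_pos ha, if_neg hb]
  · simp only [if_pos hb, if_neg ha]
  · simp only [if_neg ha, if_neg hb, Nat.add_comm a.val b.val]

noncomputable def c1 (n : ℕ) : Sym2 (Fin (2*n+1)) → ℕ :=
  Sym2.lift ⟨fun a b => col n a b, col_symm n⟩

@[simp] lemma c1_mk (n : ℕ) (a b : Fin (2*n+1)) : c1 n s(a, b) = col n a b := rfl

lemma hH1val (n : ℕ) {x : Fin (2*n+1)} (hx : x ≠ ctr n) : x.val ≤ 2*n - 1 := by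
  have h1 := x.isLt
  have h2 : x.val ≠ 2*n := fun h => hx (Fin.ext h)
  omega

lemma col_inj (n : ℕ) (hn : 1 ≤ n) (v w1 w2 : Fin (2*n+1))
    (h1 : (H1 n).Adj v w1) (h2 : (H1 n).Adj v w2) (hw : w1 ≠ w2) :
    col n v w1 ≠ col n v w2 := by
  set m := 2*n-1 with hm
  have hm1 : 1 ≤ m := by omega
  obtain ⟨hvw1, hv, hw1⟩ := h1
  obtain ⟨hvw2, -, hw2⟩ := h2
  have hvv := hH1val n hv
  have hv1 := hH1val n hw1
  have hv2 := hH1val n hw2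
  have hne1 : w1.val ≠ v.val := fun h => hvw1 (Fin.ext h.symm)
  have hne2 : w2.val ≠ v.val := fun h => hvw2 (Fin.ext h.symm)
  have hww : w1.val ≠ w2.val := fun h => hw (Fin.ext h)
  have hcop : Nat.gcd m 2 = 1 := by
    have : Odd m := by refine ⟨n-1, by omega⟩
    exact Nat.coprime_two_right.mpr this
  unfold col
  by_cases hvm : v.val = m
  · have e1 : w1.val < m := by omega
    have e2 : w2.val < m := by omega
    simp only [← hm, hvm, if_true]
    intro hc
    have hmod : 2 * w1.val ≡ 2 * w2.val [MOD m] := by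
      unfold Nat.ModEq; omega
    have := Nat.ModEq.cancel_left_of_coprime hcop hmod
    rw [Nat.ModEq, Nat.mod_eq_of_lt e1, Nat.mod_eq_of_lt e2] at this
    exact hww this
  · have hvlt : v.val < m := by omega
    simp only [← hm, hvm, if_false]
    by_cases hw1m : w1.val = m <;> by_cases hw2m : w2.val = m
    · exact absurd (hw1m.trans hw2m.symm) hww
    · simp only [hw1m, hw2m, if_true, if_false]
      intro hc
      have hmod : v.val + v.val ≡ v.val + w2.val [MOD m] := by
        unfold Nat.ModEq
        rw [show v.val + v.val = 2 * v.val from by omega]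
        omega
      have := Nat.ModEq.add_left_cancel' v.val hmod
      rw [Nat.ModEq, Nat.mod_eq_of_lt hvlt, Nat.mod_eq_of_lt (by omega : w2.val < m)] at this
      exact hne2 this.symm
    · simp only [hw1m, hw2m, if_true, if_false]
      intro hc
      have hmod : v.val + w1.val ≡ v.val + v.val [MOD m] := by
        unfold Nat.ModEq
        rw [show v.val + v.val = 2 * v.val from by omega]
        omega
      have := Nat.ModEq.add_left_cancel' v.val hmod
      rw [Nat.ModEq, Nat.mod_eq_of_lt (by omega : w1.val < m), Nat.mod_eq_of_lt hvlt] at this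
      exact hne1 this
    · simp only [hw1m, hw2m, if_false]
      intro hc
      have hmod : v.val + w1.val ≡ v.val + w2.val [MOD m] := by
        unfold Nat.ModEq; omega
      have := Nat.ModEq.add_left_cancel' v.val hmod
      rw [Nat.ModEq, Nat.mod_eq_of_lt (by omega : w1.val < m),
        Nat.mod_eq_of_lt (by omega : w2.val < m)] at this
      exact hww this

lemma col_surj (n : ℕ) (hn : 1 ≤ n) (v : Fin (2*n+1)) (hv : v ≠ ctr n) (k : ℕ)
    (hk1 : 1 ≤ k) (hk2 : k ≤ 2*n-1) :
    ∃ w : Fin (2*n+1), (H1 n).Adj v w ∧ col n v w = k := by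
  set m := 2*n-1 with hm
  have hm1 : 1 ≤ m := by omega
  have hvv := hH1val n hv
  by_cases hvm : v.val = m
  · -- v is the "infinity" vertex
    refine ⟨⟨(n*(k-1)) % m, by have := Nat.mod_lt (n*(k-1)) (show 0 < m by omega); omega⟩, ⟨?_, hv, ?_⟩, ?_⟩
    · intro h
      have := congrArg Fin.val h
      simp only [hvm] at this
      have := Nat.mod_lt (n*(k-1)) (by omega : 0 < m)
      omega
    · intro h
      have hfv := congrArg Fin.val h
      have h2 : (ctr n).val = 2*n := rfl
      have h3 := Nat.mod_lt (n*(k-1)) (by omega : 0 < m)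
      rw [h2] at hfv
      simp only at hfv
      omega
    · show col n v ⟨n * (k - 1) % m, _⟩ = k
      unfold col
      rw [if_pos hvm]
      show 2 * (n * (k - 1) % m) % m + 1 = k
      have h1 : 2 * ((n*(k-1)) % m) ≡ 2 * (n*(k-1)) [MOD m] :=
        (Nat.mod_modEq _ m).mul_left 2
      have h2 : 2 * (n*(k-1)) = (k-1) + (k-1) * m := by
        have : 2*n = m + 1 := by omega
        calc 2 * (n*(k-1)) = (2*n) * (k-1) := by ring
        _ = (m+1) * (k-1) := by rw [this]
        _ = (k-1) + (k-1)*m := by ring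
      have h3 : (k-1) + (k-1)*m ≡ (k-1) [MOD m] := by
        unfold Nat.ModEq
        simp [Nat.add_mul_mod_self_right]
      have h4 := (h1.trans (h2 ▸ Nat.ModEq.rfl)).trans h3
      rw [Nat.ModEq, Nat.mod_eq_of_lt (by omega : k-1 < m)] at h4
      omega
  · have hvlt : v.val < m := by omega
    set j := (k - 1 + (m - v.val)) % m with hj
    have hjlt : j < m := Nat.mod_lt _ (by omega)
    have hsum : v.val + j ≡ k - 1 [MOD m] := by
      have h1 : v.val + j ≡ v.val + (k - 1 + (m - v.val)) [MOD m] :=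
        (Nat.mod_modEq _ m).add_left v.val
      have h2 : v.val + (k - 1 + (m - v.val)) = (k-1) + m := by omega
      have h3 : (k-1) + m ≡ (k-1) [MOD m] := Nat.add_mod_right _ _
      exact (h1.trans (h2 ▸ Nat.ModEq.rfl)).trans h3
    have hsum' : (v.val + j) % m = k - 1 := by
      rw [Nat.ModEq, Nat.mod_eq_of_lt (by omega : k-1 < m)] at hsum
      exact hsum
    by_cases hjv : j = v.val
    · -- use the infinity vertex
      refine ⟨⟨m, by omega⟩, ⟨?_, hv, ?_⟩, ?_⟩
      · intro h
        have := congrArg Fin.val h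
        simp at this
        omega
      · intro h
        have := congrArg Fin.val h
        have h2 : (ctr n).val = 2*n := rfl
        simp [h2] at this
        omega
      · show col n v ⟨m, _⟩ = k
        unfold col
        rw [if_neg hvm]
        rw [if_pos (show ((⟨m, by omega⟩ : Fin (2*n+1)) : ℕ) = m from rfl)]
        rw [show 2 * v.val = v.val + j from by omega, hsum']
        omega
    · refine ⟨⟨j, by omega⟩, ⟨?_, hv, ?_⟩, ?_⟩
      · intro h
        have := congrArg Fin.val h
        simp at this
        omega
      · intro h
        have := congrArg Fin.val h
        have h2 : (ctr n).val = 2*n := rfl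
        simp [h2] at this
        omega
      · show col n v ⟨j, _⟩ = k
        unfold col
        rw [if_neg hvm]
        rw [if_neg (show ¬((⟨j, by omega⟩ : Fin (2*n+1)) : ℕ) = m by simp only; omega)]
        show (v.val + j) % m + 1 = k
        rw [hsum']
        omega

lemma col_le (n : ℕ) (hn : 1 ≤ n) (a b : Fin (2*n+1)) : col n a b ≤ 2*n-1 := by
  unfold col
  split
  · have := Nat.mod_lt (2*b.val) (show 0 < 2*n-1 by omega); omega
  · split
    · have := Nat.mod_lt (2*a.val) (show 0 < 2*n-1 by omega); omega
    · have := Nat.mod_lt (a.val+b.val) (show 0 < 2*n-1 by omega); omega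

lemma H1_ic (n : ℕ) (hn : 1 ≤ n) : IsIntervalColoring (H1 n) (c1 n) := by
  refine ⟨?_, ?_, ?_⟩
  · intro e1 he1 e2 he2 hne ⟨v, hv1, hv2⟩
    obtain ⟨w1, ha1, rfl⟩ := edge_ex he1 hv1
    obtain ⟨w2, ha2, rfl⟩ := edge_ex he2 hv2
    have hw : w1 ≠ w2 := fun h => hne (by rw [h])
    simpa using col_inj n hn v w1 w2 ha1 ha2 hw
  · intro e he
    induction e using Sym2.ind with
    | _ a b =>
      simp only [c1_mk]
      unfold col
      split
      · omega
      · split <;> omega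
  · intro v a ha b hb k hak hkb
    obtain ⟨e1, he1, hv1, hc1⟩ := ha
    obtain ⟨e2, he2, hv2, hc2⟩ := hb
    obtain ⟨w1, ha1, rfl⟩ := edge_ex he1 hv1
    obtain ⟨w2, ha2, rfl⟩ := edge_ex he2 hv2
    have hvc : v ≠ ctr n := ha1.2.1
    have hk1 : 1 ≤ k := by
      have : 1 ≤ a := by
        rw [c1_mk] at hc1
        unfold col at hc1
        split at hc1
        · omega
        · split at hc1 <;> omega
      omega
    have hk2 : k ≤ 2*n-1 := by
      have : b ≤ 2*n-1 := by rw [c1_mk] at hc2; rw [← hc2]; exact col_le n hn v w2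
      omega
    obtain ⟨w, hadj, hcol⟩ := col_surj n hn v hvc k hk1 hk2
    exact ⟨s(v, w), (mem_edgeSet _).mpr hadj, Sym2.mem_mk_left _ _, by rw [c1_mk]; exact hcol⟩

lemma ID2 (n : ℕ) (hn : 1 ≤ n) :
    IntervalDecomposition (⊤ : SimpleGraph (Fin (2*n+1))) 2 := by
  refine ⟨![H0 n, H1 n], fun i => le_top, ?_, ?_⟩
  · intro i
    fin_cases i
    · exact ⟨c0 n, H0_ic n⟩
    · exact ⟨c1 n, H1_ic n hn⟩
  · intro e he
    induction e using Sym2.ind with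
    | _ a b =>
    rw [mem_edgeSet, top_adj] at he
    by_cases hc : a = ctr n ∨ b = ctr n
    · refine ⟨0, ?_, ?_⟩
      · show s(a, b) ∈ (H0 n).edgeSet
        exact (mem_edgeSet _).mpr ⟨he, hc⟩
      · intro j hj
        fin_cases j
        · rfl
        · exfalso
          have : s(a,b) ∈ (H1 n).edgeSet := hj
          rw [mem_edgeSet] at this
          rcases hc with h | h
          · exact this.2.1 h
          · exact this.2.2 h
    · push_neg at hc
      refine ⟨1, ?_, ?_⟩
      · show s(a, b) ∈ (H1 n).edgeSet
        exact (mem_edgeSet _).mpr ⟨he, hc.1, hc.2⟩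
      · intro j hj
        fin_cases j
        · exfalso
          have : s(a,b) ∈ (H0 n).edgeSet := hj
          rw [mem_edgeSet] at this
          rcases this.2 with h | h
          · exact hc.1 h
          · exact hc.2 h
        · rfl

lemma not_IC (n : ℕ) (hn : 1 ≤ n) :
    ¬ IntervalColorable (⊤ : SimpleGraph (Fin (2*n+1))) := by
  classical
  rintro ⟨c, hproper, -, hint⟩
  set G := (⊤ : SimpleGraph (Fin (2*n+1))) with hG
  -- each vertex has a nonempty color set
  have hNEcol : ∀ v : Fin (2*n+1), (colorsAt G c v).Nonempty := by
    intro v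
    by_cases hv : v = ⟨0, by omega⟩
    · refine ⟨c s(v, ⟨1, by omega⟩), s(v, ⟨1, by omega⟩), ?_, Sym2.mem_mk_left _ _, rfl⟩
      rw [mem_edgeSet, hG, top_adj, hv]
      intro h
      have := congrArg Fin.val h
      simp at this
    · refine ⟨c s(v, ⟨0, by omega⟩), s(v, ⟨0, by omega⟩), ?_, Sym2.mem_mk_left _ _, rfl⟩
      rw [mem_edgeSet, hG, top_adj]
      exact hv
  set l : Fin (2*n+1) → ℕ := fun v => sInf (colorsAt G c v) with hl
  have hlmem : ∀ v, l v ∈ colorsAt G c v := fun v => Nat.sInf_mem (hNEcol v)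
  set K := Finset.univ.sup l with hK
  obtain ⟨v₀, -, hv₀⟩ := Finset.exists_mem_eq_sup Finset.univ
    (Finset.univ_nonempty) l
  have hKmem : ∀ v, K ∈ colorsAt G c v := by
    intro v
    by_cases hv : v = v₀
    · rw [hv, hK, hv₀]; exact hlmem v₀
    · have hedge : s(v, v₀) ∈ G.edgeSet := by rw [mem_edgeSet, hG, top_adj]; exact hv
      have hcv : c s(v, v₀) ∈ colorsAt G c v := ⟨_, hedge, Sym2.mem_mk_left _ _, rfl⟩
      have hcv₀ : c s(v, v₀) ∈ colorsAt G c v₀ := ⟨_, hedge, Sym2.mem_mk_right _ _, rfl⟩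
      have h1 : l v ≤ K := Finset.le_sup (Finset.mem_univ v)
      have h2 : K ≤ c s(v, v₀) := by rw [hK, hv₀]; exact Nat.sInf_le hcv₀
      exact hint v (l v) (hlmem v) (c s(v, v₀)) hcv K h1 h2
  -- choose for each vertex an edge at it with color K
  choose e he hve hce using hKmem
  choose f hf using fun v => Sym2.mem_iff_exists.mp (hve v)
  have hfne : ∀ v, f v ≠ v := by
    intro v h
    have := he v
    rw [hf v, h, mem_edgeSet] at this
    exact this.ne rfl
  have hkey : ∀ v, e (f v) = e v := by
    intro v
    by_contra hne
    have hshare : ∃ u, u ∈ e (f v) ∧ u ∈ e v := ⟨f v, hve (f v), by rw [hf v]; exact Sym2.mem_mk_right _ _⟩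
    exact hproper _ (he (f v)) _ (he v) hne hshare (by rw [hce, hce])
  have hff : ∀ v, f (f v) = v := by
    intro v
    have h1 : s(f v, f (f v)) = s(v, f v) := by rw [← hf (f v), hkey v, hf v]
    rw [Sym2.eq_iff] at h1
    rcases h1 with ⟨h, -⟩ | ⟨-, h⟩
    · exact absurd h (hfne v)
    · exact h
  -- counting argument: the map e is 2-to-1
  have hcount := Finset.card_eq_sum_card_fiberwise
    (f := e) (s := Finset.univ) (t := Finset.univ.image e)
    (fun x _ => Finset.mem_image_of_mem e (Finset.mem_univ x))
  have hfib : ∀ x ∈ Finset.univ.image e,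
      (Finset.univ.filter (fun v => e v = x)).card = 2 := by
    intro x hx
    obtain ⟨u, -, rfl⟩ := Finset.mem_image.mp hx
    have : Finset.univ.filter (fun v => e v = e u) = {u, f u} := by
      ext v
      simp only [Finset.mem_filter, Finset.mem_univ, true_and, Finset.mem_insert,
        Finset.mem_singleton]
      constructor
      · intro hev
        have hvmem : v ∈ e u := by rw [← hev]; exact hve v
        rw [hf u] at hvmem
        rcases Sym2.mem_iff.mp hvmem with h | h
        · exact Or.inl h
        · exact Or.inr h
      · rintro (rfl | rfl)
        · rfl
        · exact hkey u
    rw [this, Finset.card_insert_of_notMem (by simpa using fun h => (hfne u) h.symm),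
      Finset.card_singleton]
  rw [Finset.sum_congr rfl hfib, Finset.sum_const, smul_eq_mul] at hcount
  rw [Finset.card_univ, Fintype.card_fin] at hcount
  omega

lemma thickness_lb (n : ℕ) (hn : 1 ≤ n) (k : ℕ)
    (hk : IntervalDecomposition (⊤ : SimpleGraph (Fin (2*n+1))) k) : 2 ≤ k := by
  obtain ⟨H, hle, hic, huniq⟩ := hk
  by_contra hlt
  push_neg at hlt
  interval_cases k
  · have hedge : s((⟨0, by omega⟩ : Fin (2*n+1)), (⟨1, by omega⟩ : Fin (2*n+1))) ∈
        (⊤ : SimpleGraph (Fin (2*n+1))).edgeSet := by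
      rw [mem_edgeSet, top_adj]
      intro h
      have := congrArg Fin.val h
      simp at this
    obtain ⟨i, -, -⟩ := huniq _ hedge
    exact i.elim0
  · apply not_IC n hn
    have hH : H 0 = (⊤ : SimpleGraph (Fin (2*n+1))) := by
      apply le_antisymm (hle 0)
      intro a b hab
      have hedge : s(a, b) ∈ (⊤ : SimpleGraph (Fin (2*n+1))).edgeSet := by
        rw [mem_edgeSet]; exact hab
      obtain ⟨i, hi, -⟩ := huniq _ hedge
      have : i = 0 := Subsingleton.elim _ _
      rw [this] at hi
      exact (mem_edgeSet _).mp hi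
    rw [← hH]
    exact hic 0

theorem complete_odd_thickness_and_arboricity (n : ℕ) (hn : 1 ≤ n) :
    intervalThickness (⊤ : SimpleGraph (Fin (2 * n + 1))) = 2 ∧
      n + 1 ≤ arboricity (⊤ : SimpleGraph (Fin (2 * n + 1))) ∧
      n - 1 ≤ arboricity (⊤ : SimpleGraph (Fin (2 * n + 1))) -
        intervalThickness (⊤ : SimpleGraph (Fin (2 * n + 1))) := by
  have hth : intervalThickness (⊤ : SimpleGraph (Fin (2 * n + 1))) = 2 := by
    apply le_antisymm
    · exact Nat.sInf_le (ID2 n hn)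
    · exact le_csInf ⟨2, ID2 n hn⟩ (fun k hk => thickness_lb n hn k hk)
  have harb : n + 1 ≤ arboricity (⊤ : SimpleGraph (Fin (2 * n + 1))) := by
    obtain ⟨F, hF1, hF2, hF3⟩ := arb_mem n
    refine le_csInf ⟨2*n+1, F, hF1, hF2, hF3⟩ ?_
    rintro k ⟨F', h1, h2, h3⟩
    exact arb_lower n hn k F' h1 h2 h3
  refine ⟨hth, harb, ?_⟩
  rw [hth]
  omega
end

section
/- If a graph G admits a cyclic interval t-coloring with t ≥ 2Δ(G) − 2, then θ_int(G) ≤ 2. -/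
open SimpleGraph

variable {V : Type*}

/-- A set of colors is a cyclic interval modulo `t`: the colors (taken in `{1,…,t}`)
are consecutive in the cyclic order in which color `1` follows color `t`. -/
def IsCyclicInterval (t : ℕ) (S : Set ℕ) : Prop :=
  ∃ a l : ℕ, S = (fun j => (a + j) % t + 1) '' {j | j < l}

-- helper graph
def restrictColor (G : SimpleGraph V) (P : Sym2 V → Prop) : SimpleGraph V where
  Adj u v := G.Adj u v ∧ P s(u, v)
  symm := ⟨fun u v h => ⟨h.1.symm, by have := h.2; rwa [Sym2.eq_swap] at this⟩⟩
  loopless := ⟨fun u h => G.loopless.irrefl u h.1⟩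

lemma mem_restrict_edgeSet (G : SimpleGraph V) (P : Sym2 V → Prop) (e : Sym2 V) :
    e ∈ (restrictColor G P).edgeSet ↔ e ∈ G.edgeSet ∧ P e := by
  induction e using Sym2.ind with
  | _ u v => exact Iff.rfl

private lemma cyclic_key (t Δ a0 l x y k : ℕ) (ht : 2 * Δ - 2 ≤ t) (hl : l ≤ Δ)
    (hlt : l ≤ t) (ha0 : a0 < t)
    (hx : ∃ j, j < l ∧ (a0 + j) % t + 1 = x) (hy : ∃ j, j < l ∧ (a0 + j) % t + 1 = y)
    (hxk : x ≤ k) (hky : k ≤ y)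
    (hside : (x < Δ ∧ y < Δ) ∨ (Δ ≤ x ∧ Δ ≤ y)) :
    ∃ j, j < l ∧ (a0 + j) % t + 1 = k := by
  obtain ⟨i, hi, hxi⟩ := hx
  obtain ⟨j, hj, hyj⟩ := hy
  have mem_high : ∀ m, a0 + 1 ≤ m → m ≤ t → m ≤ a0 + l → ∃ j', j' < l ∧ (a0 + j') % t + 1 = m := by
    intro m h1 h2 h3
    exact ⟨m - a0 - 1, by omega, by rw [show a0 + (m - a0 - 1) = m - 1 by omega,
      Nat.mod_eq_of_lt (by omega)]; omega⟩
  have mem_low : ∀ m, 1 ≤ m → m + t ≤ a0 + l → ∃ j', j' < l ∧ (a0 + j') % t + 1 = m := by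
    intro m h1 h2
    refine ⟨m + t - a0 - 1, by omega, ?_⟩
    rw [show a0 + (m + t - a0 - 1) = (m - 1) + t by omega, Nat.add_mod_right,
      Nat.mod_eq_of_lt (by omega)]
    omega
  rcases lt_or_ge (a0 + i) t with hci | hci
  · rw [Nat.mod_eq_of_lt hci] at hxi
    rcases lt_or_ge (a0 + j) t with hcj | hcj
    · rw [Nat.mod_eq_of_lt hcj] at hyj
      exact mem_high k (by omega) (by omega) (by omega)
    · rw [show (a0 + j) % t = a0 + j - t from by
        rw [Nat.mod_eq_sub_mod hcj]; exact Nat.mod_eq_of_lt (by omega)] at hyj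
      exfalso; omega
  · rw [show (a0 + i) % t = a0 + i - t from by
      rw [Nat.mod_eq_sub_mod hci]; exact Nat.mod_eq_of_lt (by omega)] at hxi
    rcases lt_or_ge (a0 + j) t with hcj | hcj
    · rw [Nat.mod_eq_of_lt hcj] at hyj
      exfalso; omega
    · rw [show (a0 + j) % t = a0 + j - t from by
        rw [Nat.mod_eq_sub_mod hcj]; exact Nat.mod_eq_of_lt (by omega)] at hyj
      exact mem_low k (by omega) (by omega)

private lemma normalize_cyc (t a l : ℕ) (ht : 1 ≤ t) :
    ((fun j => (a + j) % t + 1) '' {j | j < l} : Set ℕ) =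
      (fun j => (a % t + j) % t + 1) '' {j | j < min l t} := by
  ext n
  simp only [Set.mem_image, Set.mem_setOf_eq]
  constructor
  · rintro ⟨j, hj, rfl⟩
    refine ⟨j % t, by
      have := Nat.mod_le j t; have := Nat.mod_lt j ht; omega, ?_⟩
    rw [Nat.mod_add_mod, Nat.add_mod_mod]
  · rintro ⟨j, hj, rfl⟩
    exact ⟨j, by omega, by rw [Nat.mod_add_mod]⟩

private lemma cyc_ncard (t a0 l : ℕ) (hlt : l ≤ t) :
    ((fun j => (a0 + j) % t + 1) '' {j | j < l} : Set ℕ).ncard = l := by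
  have hset : ({j | j < l} : Set ℕ) = ↑(Finset.range l) := by ext j; simp
  rw [hset, Set.ncard_image_of_injOn, Set.ncard_coe_finset, Finset.card_range]
  intro i hi j hj hij
  simp only [Finset.coe_range, Set.mem_Iio] at hi hj
  simp only at hij
  have h1 : (a0 + i) % t = (a0 + j) % t := by omega
  have h2 : i % t = j % t :=
    Nat.ModEq.add_left_cancel' a0 h1
  rwa [Nat.mod_eq_of_lt (by omega), Nat.mod_eq_of_lt (by omega)] at h2

private lemma colorsAt_eq_finset [Fintype V] [DecidableEq V] (G : SimpleGraph V)
    [DecidableRel G.Adj] (c : Sym2 V → ℕ) (v : V) :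
    colorsAt G c v = ↑((G.incidenceFinset v).image c) := by
  ext n
  simp [colorsAt, SimpleGraph.mem_incidenceFinset, SimpleGraph.incidenceSet]
  tauto

private lemma colorsAt_ncard_le [Fintype V] [DecidableEq V] (G : SimpleGraph V)
    [DecidableRel G.Adj] (c : Sym2 V → ℕ) (v : V) :
    (colorsAt G c v).ncard ≤ G.maxDegree := by
  rw [colorsAt_eq_finset, Set.ncard_coe_finset]
  calc ((G.incidenceFinset v).image c).card ≤ (G.incidenceFinset v).card :=
        Finset.card_image_le
    _ = G.degree v := G.card_incidenceFinset_eq_degree v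
    _ ≤ G.maxDegree := G.degree_le_maxDegree v

private lemma restrict_interval [Fintype V] [DecidableEq V] (G : SimpleGraph V)
    [DecidableRel G.Adj] (c : Sym2 V → ℕ) (t : ℕ) (ht : 2 * G.maxDegree - 2 ≤ t)
    (hp : IsProperEdgeColoring G c) (hr : ∀ e ∈ G.edgeSet, c e ∈ Finset.Icc 1 t)
    (hcyc : ∀ v, IsCyclicInterval t (colorsAt G c v)) (Q : ℕ → Prop)
    (hQ : (∀ n, Q n ↔ n < G.maxDegree) ∨ (∀ n, Q n ↔ G.maxDegree ≤ n)) :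
    IsIntervalColoring (restrictColor G (fun e => Q (c e))) c := by
  set Δ := G.maxDegree with hΔ
  set H := restrictColor G (fun e => Q (c e)) with hH
  have hsub : ∀ e ∈ H.edgeSet, e ∈ G.edgeSet := fun e he =>
    ((mem_restrict_edgeSet G _ e).mp he).1
  refine ⟨fun e₁ h1 e₂ h2 => hp e₁ (hsub e₁ h1) e₂ (hsub e₂ h2), fun e he => by
    have := hr e (hsub e he); simp at this; omega, ?_⟩
  intro v a ha b hb k hak hkb
  -- characterize colorsAt H
  have hmemH : ∀ n, n ∈ colorsAt H c v ↔ n ∈ colorsAt G c v ∧ Q n := by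
    intro n
    constructor
    · rintro ⟨e, he, hv, rfl⟩
      obtain ⟨heG, hQe⟩ := (mem_restrict_edgeSet G _ e).mp he
      exact ⟨⟨e, heG, hv, rfl⟩, hQe⟩
    · rintro ⟨⟨e, he, hv, rfl⟩, hq⟩
      exact ⟨e, (mem_restrict_edgeSet G _ e).mpr ⟨he, hq⟩, hv, rfl⟩
  obtain ⟨haG, hQa⟩ := (hmemH a).mp ha
  obtain ⟨hbG, hQb⟩ := (hmemH b).mp hb
  -- t ≥ 1
  have ht1 : 1 ≤ t := by
    obtain ⟨e, he, -, rfl⟩ := haG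
    have := hr e he; simp at this; omega
  obtain ⟨a', l, hS⟩ := hcyc v
  rw [normalize_cyc t a' l ht1] at hS
  set a0 := a' % t with ha0def
  set l' := min l t with hl'def
  have ha0 : a0 < t := Nat.mod_lt _ ht1
  have hl't : l' ≤ t := min_le_right _ _
  have hl'Δ : l' ≤ Δ := by
    have h1 := colorsAt_ncard_le G c v
    rw [hS, cyc_ncard t a0 l' hl't] at h1
    exact h1
  -- membership as existentials
  have hmemS : ∀ n, n ∈ colorsAt G c v ↔ ∃ j, j < l' ∧ (a0 + j) % t + 1 = n := by
    intro n
    rw [hS]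
    simp [Set.mem_image]
  have hside : (a < Δ ∧ b < Δ) ∨ (Δ ≤ a ∧ Δ ≤ b) := by
    rcases hQ with hQ' | hQ'
    · exact Or.inl ⟨(hQ' a).mp hQa, (hQ' b).mp hQb⟩
    · exact Or.inr ⟨(hQ' a).mp hQa, (hQ' b).mp hQb⟩
  have hk : ∃ j, j < l' ∧ (a0 + j) % t + 1 = k :=
    cyclic_key t Δ a0 l' a b k ht hl'Δ hl't ha0 ((hmemS a).mp haG) ((hmemS b).mp hbG)
      hak hkb hside
  have hQk : Q k := by
    rcases hQ with hQ' | hQ'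
    · exact (hQ' k).mpr (lt_of_le_of_lt hkb ((hQ' b).mp hQb))
    · exact (hQ' k).mpr (le_trans ((hQ' a).mp hQa) hak)
  exact (hmemH k).mpr ⟨(hmemS k).mpr hk, hQk⟩

theorem intervalThickness_le_two_of_cyclic_interval_coloring [Fintype V] [DecidableEq V]
    (G : SimpleGraph V) [DecidableRel G.Adj] (t : ℕ) (ht : 2 * G.maxDegree - 2 ≤ t)
    (h : ∃ c, IsProperEdgeColoring G c ∧ (∀ e ∈ G.edgeSet, c e ∈ Finset.Icc 1 t) ∧
      ∀ v, IsCyclicInterval t (colorsAt G c v)) :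
    intervalThickness G ≤ 2 := by
  obtain ⟨c, hp, hr, hcyc⟩ := h
  set Δ := G.maxDegree with hΔ
  set H1 := restrictColor G (fun e => c e < Δ) with hH1
  set H2 := restrictColor G (fun e => Δ ≤ c e) with hH2
  apply Nat.sInf_le
  refine ⟨fun i => if i = 0 then H1 else H2, ?_, ?_, ?_⟩
  · intro i u v hadj
    by_cases hi : i = 0 <;> simp [hi] at hadj <;> exact And.left hadj
  · intro i
    by_cases hi : i = 0 <;> simp only [hi, if_pos, if_neg, reduceIte]
    · exact ⟨c, restrict_interval G c t ht hp hr hcyc _ (Or.inl fun n => Iff.rfl)⟩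
    · exact ⟨c, restrict_interval G c t ht hp hr hcyc _ (Or.inr fun n => Iff.rfl)⟩
  · intro e he
    by_cases hc : c e < Δ
    · refine ⟨0, ?_, ?_⟩
      · simp only [reduceIte]
        exact (mem_restrict_edgeSet G _ e).mpr ⟨he, hc⟩
      · intro i hi
        by_contra hne
        simp only [if_neg hne] at hi
        exact absurd ((mem_restrict_edgeSet G _ e).mp hi).2 (by omega)
    · refine ⟨1, ?_, ?_⟩
      · simp only [Fin.one_eq_zero_iff, if_neg]
        exact (mem_restrict_edgeSet G _ e).mpr ⟨he, by omega⟩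
      · intro i hi
        by_cases hne : i = 0
        · rw [hne] at hi
          simp only [reduceIte] at hi
          exact absurd ((mem_restrict_edgeSet G _ e).mp hi).2 (by omega)
        · omega
end
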